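/- Let S be an additive subgroup of ℝ² such that every element (x, y) ∈ S satisfies x·y ≤ 0. Then S is contained in a line through the origin; that is, any two elements of S are linearly dependent over ℝ. -/

import Mathlib

/-- Key lemma: an indefinite binary quadratic form with negative leading coefficient
that is nonpositive on all integer points has nonpositive discriminant. -/
lemma key_quadform (A B C : ℝ) (hA : A < 0)
    (hQ : ∀ m n : ℤ, A * (m : ℝ) ^ 2 + B * m * n + C * n ^ 2 ≤ 0) :
    B ^ 2 - 4 * A * C ≤ 0 := by
  by_contra hlt
  push_neg at hlt
  set s := Real.sqrt (B ^ 2 - 4 * A * C) with hsdef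
  have hs2 : s ^ 2 = B ^ 2 - 4 * A * C := Real.sq_sqrt hlt.le
  have hs : 0 < s := Real.sqrt_pos.2 hlt
  obtain ⟨n, hn⟩ := exists_nat_gt ((2 * (-A)) / s)
  have hns : (n : ℝ) * s > 2 * (-A) := by
    rw [gt_iff_lt, ← div_lt_iff₀ hs] at *
    exact hn
  set c : ℝ := (n : ℝ) * (-B) / (2 * A) with hcdef
  set m : ℤ := ⌊c⌋ + 1 with hmdef
  have h1 : c < (m : ℝ) := by
    rw [hmdef]; push_cast; exact Int.lt_floor_add_one c
  have h2 : (m : ℝ) ≤ c + 1 := by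
    rw [hmdef]; push_cast; linarith [Int.floor_le c]
  have h2A : (2 : ℝ) * A ≠ 0 := by intro hh; nlinarith
  have hc : 2 * A * c = (n : ℝ) * (-B) := by
    rw [hcdef]; field_simp [hA.ne]
  have ht1 : 2 * A * (m : ℝ) + (n : ℝ) * B < 0 := by nlinarith
  have ht2 : 2 * A * (m : ℝ) + (n : ℝ) * B > -((n : ℝ) * s) := by nlinarith
  have hsq : (2 * A * (m : ℝ) + (n : ℝ) * B) ^ 2 < ((n : ℝ) * s) ^ 2 := by
    nlinarith
  have hQmn := hQ m ((n : ℤ))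
  push_cast at hQmn
  nlinarith [hQmn, hsq, hs2]

/-- If `S` is an additive subgroup of `ℝ²` all of whose elements `(x, y)` satisfy
`x * y ≤ 0`, then any two elements of `S` are linearly dependent over `ℝ`,
i.e. `S` is contained in a line through the origin. -/
theorem subgroup_nonpositive_product_contained_in_line
    (S : AddSubgroup (ℝ × ℝ)) (h : ∀ s ∈ S, s.1 * s.2 ≤ 0) :
    ∀ u ∈ S, ∀ v ∈ S, ∃ a b : ℝ, (a, b) ≠ (0, 0) ∧ a • u + b • v = 0 := by
  intro u hu v hv
  -- abbreviations
  set A : ℝ := u.1 * u.2 with hAdef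
  set C : ℝ := v.1 * v.2 with hCdef
  set B : ℝ := u.1 * v.2 + u.2 * v.1 with hBdef
  have hA : A ≤ 0 := h u hu
  have hC : C ≤ 0 := h v hv
  have hQ : ∀ m n : ℤ, A * (m : ℝ) ^ 2 + B * m * n + C * n ^ 2 ≤ 0 := by
    intro m n
    have hmem : m • u + n • v ∈ S := S.add_mem (S.zsmul_mem hu m) (S.zsmul_mem hv n)
    have hle := h _ hmem
    have e1 : (m • u + n • v).1 = (m : ℝ) * u.1 + (n : ℝ) * v.1 := by
      simp [zsmul_eq_mul]
    have e2 : (m • u + n • v).2 = (m : ℝ) * u.2 + (n : ℝ) * v.2 := by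
      simp [zsmul_eq_mul]
    rw [e1, e2] at hle
    rw [hAdef, hBdef, hCdef]
    nlinarith [hle]
  have hd : u.1 * v.2 - u.2 * v.1 = 0 := by
    have hdisc : B ^ 2 - 4 * A * C ≤ 0 := by
      rcases lt_or_eq_of_le hA with hA' | hA'
      · exact key_quadform A B C hA' hQ
      · rcases lt_or_eq_of_le hC with hC' | hC'
        · have hQ' : ∀ m n : ℤ, C * (m : ℝ) ^ 2 + B * m * n + A * n ^ 2 ≤ 0 := by
            intro m n
            have := hQ n m
            nlinarith [this]
          have := key_quadform C B A hC' hQ'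
          nlinarith
        · -- A = 0 and C = 0
          have hB1 := hQ 1 1
          have hB2 := hQ 1 (-1)
          push_cast at hB1 hB2
          have hB0 : B = 0 := by nlinarith
          nlinarith
    have hsq : (u.1 * v.2 - u.2 * v.1) ^ 2 ≤ 0 := by
      have : (u.1 * v.2 - u.2 * v.1) ^ 2 = B ^ 2 - 4 * A * C := by
        rw [hAdef, hBdef, hCdef]; ring
      linarith [this ▸ hdisc]
    nlinarith [sq_nonneg (u.1 * v.2 - u.2 * v.1)]
  -- now produce the dependence
  by_cases hu1 : u.1 ≠ 0
  · refine ⟨v.1 / u.1, -1, ?_, ?_⟩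
    · simp [Prod.ext_iff]
    · have e1 : (v.1 / u.1) * u.1 + (-1) * v.1 = 0 := by field_simp; ring
      have e2 : (v.1 / u.1) * u.2 + (-1) * v.2 = 0 := by
        field_simp
        nlinarith [hd]
      ext <;> simp only [Prod.fst_add, Prod.snd_add, Prod.smul_fst, Prod.smul_snd,
        smul_eq_mul, Prod.fst_zero, Prod.snd_zero] <;> linarith
  · push_neg at hu1
    by_cases hu2 : u.2 ≠ 0
    · refine ⟨v.2 / u.2, -1, ?_, ?_⟩
      · simp [Prod.ext_iff]
      · have hv1 : v.1 = 0 := by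
          have h0 : u.2 * v.1 = 0 := by rw [hu1] at hd; linarith
          exact (mul_eq_zero.1 h0).resolve_left hu2
        have e1 : (v.2 / u.2) * u.1 + (-1) * v.1 = 0 := by rw [hu1, hv1]; ring
        have e2 : (v.2 / u.2) * u.2 + (-1) * v.2 = 0 := by field_simp; ring
        ext <;> simp only [Prod.fst_add, Prod.snd_add, Prod.smul_fst, Prod.smul_snd,
          smul_eq_mul, Prod.fst_zero, Prod.snd_zero] <;> linarith
    · push_neg at hu2
      refine ⟨1, 0, ?_, ?_⟩
      · simp
      · ext <;> simp [hu1, hu2]
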